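/- Let λ > 0, κ > 0, δ ∈ (0, 1), and let φ be an integrable complex-valued function on ℝ⁴. Then lim_{γ→∞} ∫∫ D_κ(γ^δ·(x⁰ − y⁰), γ·(x⃗ − y⃗))·|φ(x)|·|φ(y)| dx dy = 0, where the integral is over ℝ⁴ × ℝ⁴. -/

import Mathlib

noncomputable section

open MeasureTheory Filter Real

/-- Minkowski space modeled as `ℝ × ℝ³` (time component and spatial part). -/
abbrev M : Type := ℝ × EuclideanSpace ℝ (Fin 3)

/-- The commutator-bounding function `D_κ` (with length parameter `lam`). -/
def Dkappa (lam κ : ℝ) (a : M) : ℝ :=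
  if ‖a.2‖ ^ 2 ≤ a.1 ^ 2 then 1
  else lam ^ κ / (lam + ‖a.2‖ - |a.1|) ^ κ

lemma abs_lt_of_sq {a b : ℝ} (hb : 0 ≤ b) (h : a ^ 2 < b ^ 2) : |a| < b := by
  nlinarith [abs_nonneg a, sq_abs a]

lemma Dkappa_nonneg {lam κ : ℝ} (hlam : 0 < lam) (a : M) : 0 ≤ Dkappa lam κ a := by
  unfold Dkappa
  split
  · norm_num
  · next h =>
    have habs : |a.1| < ‖a.2‖ := abs_lt_of_sq (norm_nonneg _) (not_le.mp h)
    have hpos : 0 < lam + ‖a.2‖ - |a.1| := by linarith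
    positivity

lemma Dkappa_le_one {lam κ : ℝ} (hlam : 0 < lam) (hκ : 0 ≤ κ) (a : M) :
    Dkappa lam κ a ≤ 1 := by
  unfold Dkappa
  split
  · exact le_refl 1
  · next h =>
    have habs : |a.1| < ‖a.2‖ := abs_lt_of_sq (norm_nonneg _) (not_le.mp h)
    have hpos : 0 < lam + ‖a.2‖ - |a.1| := by linarith
    rw [div_le_one (by positivity)]
    exact Real.rpow_le_rpow hlam.le (by linarith) hκ

lemma measurable_Dkappa {lam : ℝ} (κ : ℝ) (hlam : 0 < lam) : Measurable (Dkappa lam κ) := by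
  have heq : Dkappa lam κ = fun a : M => if ‖a.2‖ ^ 2 ≤ a.1 ^ 2 then 1
      else lam ^ κ / (max lam (lam + ‖a.2‖ - |a.1|)) ^ κ := by
    funext a
    unfold Dkappa
    split
    · rfl
    · next h =>
      have habs : |a.1| < ‖a.2‖ := abs_lt_of_sq (norm_nonneg _) (not_le.mp h)
      rw [max_eq_right (by linarith)]
  rw [heq]
  apply Measurable.ite
  · exact measurableSet_le (by fun_prop) (by fun_prop)
  · exact measurable_const
  · have hc : Continuous fun a : M => (max lam (lam + ‖a.2‖ - |a.1|)) ^ κ := by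
      apply Continuous.rpow_const
      · fun_prop
      · intro a
        exact Or.inl (ne_of_gt (lt_of_lt_of_le hlam (le_max_left _ _)))
    exact measurable_const.div hc.measurable

lemma tendsto_Dkappa (lam κ δ : ℝ) (hlam : 0 < lam) (hκ : 0 < κ) (hδ0 : 0 < δ) (hδ1 : δ < 1)
    (t : ℝ) (d : EuclideanSpace ℝ (Fin 3)) (hd : d ≠ 0) :
    Tendsto (fun γ : ℝ => Dkappa lam κ (γ ^ δ * t, γ • d)) atTop (nhds 0) := by
  have hdn : 0 < ‖d‖ := norm_pos_iff.mpr hd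
  have h1 : Tendsto (fun γ : ℝ => γ ^ (1 - δ)) atTop atTop := tendsto_rpow_atTop (by linarith)
  have h2 : Tendsto (fun γ : ℝ => γ ^ (1 - δ) * ‖d‖ - |t|) atTop atTop := by
    simp only [sub_eq_add_neg]
    exact tendsto_atTop_add_const_right atTop (-|t|) (h1.atTop_mul_const hdn)
  have h3 : Tendsto (fun γ : ℝ => γ ^ δ) atTop atTop := tendsto_rpow_atTop hδ0
  have h4 : Tendsto (fun γ : ℝ => lam + γ ^ δ * (γ ^ (1 - δ) * ‖d‖ - |t|)) atTop atTop :=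
    tendsto_atTop_add_const_left _ lam (h3.atTop_mul_atTop₀ h2)
  have h5 : Tendsto (fun γ : ℝ =>
      lam ^ κ / (lam + γ ^ δ * (γ ^ (1 - δ) * ‖d‖ - |t|)) ^ κ) atTop (nhds 0) :=
    tendsto_const_nhds.div_atTop ((tendsto_rpow_atTop hκ).comp h4)
  apply h5.congr'
  filter_upwards [eventually_gt_atTop 0, h1.eventually_gt_atTop (|t| / ‖d‖)] with γ hγ hγ2
  have hγδ : 0 < γ ^ δ := rpow_pos_of_pos hγ δ
  have hprod : γ ^ δ * γ ^ (1 - δ) = γ := by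
    rw [← Real.rpow_add hγ]; norm_num
  have hlt : γ ^ δ * |t| < γ * ‖d‖ := by
    have ht : |t| < γ ^ (1 - δ) * ‖d‖ := (div_lt_iff₀ hdn).mp hγ2
    calc γ ^ δ * |t| < γ ^ δ * (γ ^ (1 - δ) * ‖d‖) := by nlinarith
    _ = γ * ‖d‖ := by rw [← mul_assoc, hprod]
  have hnorm : ‖γ • d‖ = γ * ‖d‖ := by
    rw [norm_smul, Real.norm_eq_abs, abs_of_pos hγ]
  have habs : |γ ^ δ * t| = γ ^ δ * |t| := by rw [abs_mul, abs_of_pos hγδ]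
  have hbase : lam + γ ^ δ * (γ ^ (1 - δ) * ‖d‖ - |t|) = lam + γ * ‖d‖ - γ ^ δ * |t| := by
    rw [mul_sub, ← mul_assoc, hprod]; ring
  unfold Dkappa
  simp only
  rw [if_neg]
  · rw [hnorm, habs, hbase]
  · simp only [not_le, hnorm, habs]
    have h2' : (γ ^ δ * t) ^ 2 = (γ ^ δ * |t|) ^ 2 := by
      rw [← sq_abs, habs]
    rw [h2']
    exact pow_lt_pow_left₀ hlt (by positivity) (by norm_num)

/-- For integrable `φ` on `ℝ⁴` and `δ ∈ (0,1)`: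
`∫∫ D_κ(γ^δ(x⁰−y⁰), γ(x⃗−y⃗)) |φ(x)| |φ(y)| dx dy → 0` as `γ → ∞`. -/
theorem stmt17 (lam κ δ : ℝ) (hlam : 0 < lam) (hκ : 0 < κ) (hδ : δ ∈ Set.Ioo (0 : ℝ) 1)
    (φ : M → ℂ) (hφ : Integrable φ) :
    Tendsto (fun γ : ℝ => ∫ x : M, ∫ y : M,
        Dkappa lam κ (γ ^ δ * (x.1 - y.1), γ • (x.2 - y.2)) * (‖φ x‖ * ‖φ y‖))
      atTop (nhds 0) := by
  obtain ⟨hδ0, hδ1⟩ := hδ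
  set μ : Measure (M × M) := (volume : Measure M).prod volume with hμ
  set bound : M × M → ℝ := fun p => ‖φ p.1‖ * ‖φ p.2‖ with hbounddef
  set F : ℝ → M × M → ℝ := fun γ p =>
    Dkappa lam κ (γ ^ δ * (p.1.1 - p.2.1), γ • (p.1.2 - p.2.2)) * (‖φ p.1‖ * ‖φ p.2‖)
    with hFdef
  have hbound_int : Integrable bound μ := hφ.norm.mul_prod hφ.norm
  have hFmeas : ∀ γ : ℝ, AEStronglyMeasurable (F γ) μ := by
    intro γ
    apply AEStronglyMeasurable.mul
    · exact ((measurable_Dkappa κ hlam).comp (by fun_prop)).aestronglyMeasurable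
    · exact hbound_int.aestronglyMeasurable
  have hFbound : ∀ γ : ℝ, ∀ᵐ p ∂μ, ‖F γ p‖ ≤ bound p := by
    intro γ
    filter_upwards with p
    have h0 := Dkappa_nonneg (κ := κ) hlam (γ ^ δ * (p.1.1 - p.2.1), γ • (p.1.2 - p.2.2))
    have h1 := Dkappa_le_one (κ := κ) hlam hκ.le (γ ^ δ * (p.1.1 - p.2.1), γ • (p.1.2 - p.2.2))
    have hb : 0 ≤ ‖φ p.1‖ * ‖φ p.2‖ := by positivity
    calc ‖F γ p‖ = Dkappa lam κ (γ ^ δ * (p.1.1 - p.2.1), γ • (p.1.2 - p.2.2)) *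
          (‖φ p.1‖ * ‖φ p.2‖) := by
          rw [Real.norm_eq_abs, abs_of_nonneg (mul_nonneg h0 hb)]
    _ ≤ 1 * (‖φ p.1‖ * ‖φ p.2‖) := mul_le_mul_of_nonneg_right h1 hb
    _ = bound p := by rw [one_mul]
  have hFint : ∀ γ : ℝ, Integrable (F γ) μ := fun γ =>
    hbound_int.mono' (hFmeas γ) (hFbound γ)
  -- the diagonal in the spatial components is null
  have hS : MeasurableSet {p : M × M | p.1.2 = p.2.2} :=
    measurableSet_eq_fun (by fun_prop) (by fun_prop)
  have hnull : μ {p : M × M | p.1.2 = p.2.2} = 0 := by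
    rw [hμ, Measure.measure_prod_null hS]
    filter_upwards with x
    have hslice : (Prod.mk x ⁻¹' {p : M × M | p.1.2 = p.2.2}) =
        (Set.univ : Set ℝ) ×ˢ ({x.2} : Set (EuclideanSpace ℝ (Fin 3))) := by
      ext y
      simp only [Set.mem_preimage, Set.mem_setOf_eq, Set.mem_prod, Set.mem_univ,
        Set.mem_singleton_iff, true_and]
      exact eq_comm
    rw [hslice, Measure.volume_eq_prod ℝ (EuclideanSpace ℝ (Fin 3)), Measure.prod_prod,
      measure_singleton, mul_zero]
    simp
  have hae : ∀ᵐ p ∂μ, p.1.2 ≠ p.2.2 := by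
    rw [ae_iff]
    simpa using hnull
  have hlim : ∀ᵐ p ∂μ, Tendsto (fun γ => F γ p) atTop (nhds 0) := by
    filter_upwards [hae] with p hp
    have hd : p.1.2 - p.2.2 ≠ 0 := sub_ne_zero.mpr hp
    have := (tendsto_Dkappa lam κ δ hlam hκ hδ0 hδ1 (p.1.1 - p.2.1) (p.1.2 - p.2.2) hd).mul_const
      (‖φ p.1‖ * ‖φ p.2‖)
    simpa using this
  have key : Tendsto (fun γ : ℝ => ∫ p, F γ p ∂μ) atTop (nhds 0) := by
    have h0 : (0 : ℝ) = ∫ _ : M × M, (0 : ℝ) ∂μ := by simp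
    rw [h0]
    exact tendsto_integral_filter_of_dominated_convergence bound
      (Eventually.of_forall hFmeas) (Eventually.of_forall hFbound) hbound_int hlim
  have heq : ∀ γ : ℝ, (∫ x : M, ∫ y : M,
      Dkappa lam κ (γ ^ δ * (x.1 - y.1), γ • (x.2 - y.2)) * (‖φ x‖ * ‖φ y‖)) =
      ∫ p, F γ p ∂μ := by
    intro γ
    exact integral_integral (f := fun x y : M =>
      Dkappa lam κ (γ ^ δ * (x.1 - y.1), γ • (x.2 - y.2)) * (‖φ x‖ * ‖φ y‖)) (hFint γ)
  simpa only [heq] using key
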